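/- Let q be a positive integer. If m ≥ 2 and f ≥ 1 are integers with n = m + f - 1 such that ∑_{i=m}^{n} 1/i < q < ∑_{i=m}^{n+1} 1/i, then ⌈m(e^q - 1) - e^q⌉ ≤ f ≤ ⌊m(e^q - 1)⌋. -/

import Mathlib

lemma aux_lower (m : ℕ) (hm : 1 ≤ m) :
    ∀ n, m - 1 ≤ n → Real.log (n + 1) - Real.log m ≤ ∑ i ∈ Finset.Icc m n, (1 : ℝ) / i := by
  refine Nat.le_induction ?_ ?_
  · have : Finset.Icc m (m - 1) = ∅ := by
      apply Finset.Icc_eq_empty; omega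
    rw [this]
    have : ((m - 1 : ℕ) : ℝ) + 1 = (m : ℝ) := by
      have : (m - 1 : ℕ) = m - 1 := rfl
      push_cast [Nat.cast_sub hm]; ring
    simp [this]
  · intro n hn ih
    have hmn : m ≤ n + 1 := by omega
    rw [Finset.sum_Icc_succ_top hmn]
    have hn1 : (0 : ℝ) < (n : ℝ) + 1 := by positivity
    have hkey : Real.log (↑(n + 1) + 1) - Real.log (n + 1) ≤ 1 / (n + 1) := by
      have hpos : (0 : ℝ) < ((n : ℝ) + 2) / ((n : ℝ) + 1) := by positivity
      have := Real.log_le_sub_one_of_pos hpos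
      rw [Real.log_div (by positivity) (by positivity)] at this
      have heq : ((n : ℝ) + 2) / ((n : ℝ) + 1) - 1 = 1 / ((n : ℝ) + 1) := by
        field_simp; norm_num
      rw [heq] at this
      push_cast
      ring_nf at this ⊢
      linarith
    push_cast at ih hkey ⊢
    simp only [one_div] at ih hkey ⊢
    ring_nf at ih hkey ⊢
    linarith

lemma aux_upper (m : ℕ) (hm : 2 ≤ m) :
    ∀ n, m - 1 ≤ n → ∑ i ∈ Finset.Icc m n, (1 : ℝ) / i ≤ Real.log n - Real.log (m - 1) := by
  refine Nat.le_induction ?_ ?_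
  · have : Finset.Icc m (m - 1) = ∅ := by
      apply Finset.Icc_eq_empty; omega
    rw [this]
    have : ((m - 1 : ℕ) : ℝ) = (m : ℝ) - 1 := by
      push_cast [Nat.cast_sub (by omega : 1 ≤ m)]; ring
    simp [this]
  · intro n hn ih
    have hmn : m ≤ n + 1 := by omega
    rw [Finset.sum_Icc_succ_top hmn]
    have hnpos : (0 : ℝ) < (n : ℝ) := by
      have : 1 ≤ n := by omega
      exact_mod_cast Nat.lt_of_lt_of_le Nat.zero_lt_one this
    have hkey : 1 / ((n : ℝ) + 1) ≤ Real.log (↑(n + 1)) - Real.log n := by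
      have hpos : (0 : ℝ) < (n : ℝ) / ((n : ℝ) + 1) := by positivity
      have := Real.log_le_sub_one_of_pos hpos
      rw [Real.log_div (by positivity) (by positivity)] at this
      have heq : (n : ℝ) / ((n : ℝ) + 1) - 1 = -(1 / ((n : ℝ) + 1)) := by
        field_simp; ring
      push_cast
      linarith [heq ▸ this]
    push_cast at ih hkey ⊢
    linarith

theorem stmt4 (q m f n : ℕ) (hq : 1 ≤ q) (hm : 2 ≤ m) (hf : 1 ≤ f) (hn : n = m + f - 1)
    (h1 : (∑ i ∈ Finset.Icc m n, (1 : ℝ) / i) < q)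
    (h2 : (q : ℝ) < ∑ i ∈ Finset.Icc m (n + 1), (1 : ℝ) / i) :
    ⌈(m : ℝ) * (Real.exp q - 1) - Real.exp q⌉ ≤ (f : ℤ) ∧
    (f : ℤ) ≤ ⌊(m : ℝ) * (Real.exp q - 1)⌋ := by
  set E := Real.exp q with hE
  have hEpos : (0 : ℝ) < E := Real.exp_pos _
  have hlogE : Real.log E = q := Real.log_exp _
  have hmpos : (0 : ℝ) < (m : ℝ) := by exact_mod_cast Nat.lt_of_lt_of_le Nat.zero_lt_two hm
  have hm1pos : (0 : ℝ) < (m : ℝ) - 1 := by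
    have : (1 : ℝ) < m := by exact_mod_cast Nat.lt_of_lt_of_le Nat.one_lt_two hm
    linarith
  have hn1 : (n : ℝ) + 1 = (m : ℝ) + f := by
    have : n + 1 = m + f := by omega
    exact_mod_cast congrArg (Nat.cast : ℕ → ℝ) this
  -- lower bound on sum gives f ≤ floor
  have hL := aux_lower m (by omega) n (by omega)
  have hU := aux_upper m hm (n + 1) (by omega)
  have hm1cast : ((m : ℝ)) - 1 = ((m - 1 : ℕ) : ℝ) := by
    push_cast [Nat.cast_sub (by omega : 1 ≤ m)]; ring
  -- from h1: log((n+1)) - log m < q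
  have key1 : Real.log ((n : ℝ) + 1) - Real.log m < q := lt_of_le_of_lt hL h1
  have key2 : (q : ℝ) < Real.log (↑(n + 1)) - Real.log ((m : ℝ) - 1) := by
    exact lt_of_lt_of_le h2 hU
  -- exponentiate key1
  have e1 : (n : ℝ) + 1 < m * E := by
    have hdiv : Real.log (((n : ℝ) + 1) / m) < Real.log E := by
      rw [Real.log_div (by positivity) (by positivity), hlogE]; exact key1
    have := (Real.log_lt_log_iff (by positivity) hEpos).mp hdiv
    calc (n : ℝ) + 1 = (((n : ℝ) + 1) / m) * m := by field_simp
    _ < E * m := by exact mul_lt_mul_of_pos_right this hmpos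
    _ = m * E := by ring
  have e2 : ((m : ℝ) - 1) * E < (n : ℝ) + 1 := by
    have hdiv : Real.log E < Real.log (((n : ℝ) + 1) / ((m : ℝ) - 1)) := by
      rw [Real.log_div (by positivity) (by positivity), hlogE]
      push_cast at key2 ⊢
      linarith
    have := (Real.log_lt_log_iff hEpos (by positivity)).mp hdiv
    calc ((m : ℝ) - 1) * E < ((m : ℝ) - 1) * (((n : ℝ) + 1) / ((m : ℝ) - 1)) :=
      mul_lt_mul_of_pos_left this hm1pos
    _ = (n : ℝ) + 1 := by field_simp
  constructor
  · apply Int.ceil_le.mpr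
    push_cast
    rw [hn1] at e2
    nlinarith
  · apply Int.le_floor.mpr
    push_cast
    rw [hn1] at e1
    nlinarith
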